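/- Let F_p be a finite field, d₀ ≥ 1, and suppose m₁(x),…,mₙ(x) ∈ F_p[x] are pairwise coprime, each coprime to x^{d₀}, with degrees d₀ ≤ d₁ ≤ … ≤ dₙ. Let t₁ < t₂ be thresholds, let s(x) have deg s < d₀, let f₁(x) = s(x) + α₁(x)x^{d₀} with deg α₁ < Σ_{i=1}^{t₁}dᵢ − d₀, and f₂(x) = s(x) + α₂(x)x^{d₀} with deg α₂ < Σ_{i=1}^{t₂}dᵢ − d₀. Suppose a coalition B of participants holds residues f₂ mod mᵢ for i ∈ B with Σ_{i∈B} dᵢ ≥ Σ_{i=1}^{t₁} dᵢ, and additionally knows the polynomial f₂ − f₁. Then the coalition can compute s(x) exactly; i.e., s(x) is uniquely determined by {f₂ mod mᵢ : i ∈ B} and f₂ − f₁. -/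
import Mathlib


open Polynomial Finset

/-- Full attack on the Yang et al. scheme: a coalition `B` holding the
residues `f₂ mod mᵢ` (`i ∈ B`) with `Σ_{i∈B} dᵢ ≥ Σ_{i=1}^{t₁} dᵢ`, and
knowing the polynomial `f₂ − f₁`, determines the secret `s` exactly: any
other choice of secret and masks producing the same data yields the same
secret. -/
theorem attack_full (p : ℕ) [Fact p.Prime] (d₀ : ℕ) (hd₀ : 1 ≤ d₀)
    (n : ℕ) (m : ℕ → (ZMod p)[X])
    (hcop : ∀ i ∈ Finset.range n, ∀ j ∈ Finset.range n,
      i ≠ j → IsCoprime (m i) (m j))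
    (hcop₀ : ∀ i ∈ Finset.range n, IsCoprime (m i) (X ^ d₀))
    (hdle : ∀ i ∈ Finset.range n, d₀ ≤ (m i).natDegree)
    (hsort : ∀ i j, i ≤ j → j < n → (m i).natDegree ≤ (m j).natDegree)
    (t₁ t₂ : ℕ) (ht₁ : 1 ≤ t₁) (ht : t₁ < t₂) (ht₂ : t₂ ≤ n)
    (s s' α₁ α₁' α₂ α₂' : (ZMod p)[X])
    (hs : s.degree < (d₀ : ℕ)) (hs' : s'.degree < (d₀ : ℕ))
    (hα₁ : α₁.degree <
      ((∑ i ∈ Finset.range t₁, (m i).natDegree - d₀ : ℕ) : WithBot ℕ))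
    (hα₁' : α₁'.degree <
      ((∑ i ∈ Finset.range t₁, (m i).natDegree - d₀ : ℕ) : WithBot ℕ))
    (hα₂ : α₂.degree <
      ((∑ i ∈ Finset.range t₂, (m i).natDegree - d₀ : ℕ) : WithBot ℕ))
    (hα₂' : α₂'.degree <
      ((∑ i ∈ Finset.range t₂, (m i).natDegree - d₀ : ℕ) : WithBot ℕ))
    (B : Finset ℕ) (hB : B ⊆ Finset.range n)
    (hBsum : ∑ i ∈ Finset.range t₁, (m i).natDegree ≤
      ∑ i ∈ B, (m i).natDegree)
    -- the coalition's data coincides for the two scenarios: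
    (hres : ∀ i ∈ B,
      (s + α₂ * X ^ d₀) % m i = (s' + α₂' * X ^ d₀) % m i)
    (hdiff : (s + α₂ * X ^ d₀) - (s + α₁ * X ^ d₀) =
      (s' + α₂' * X ^ d₀) - (s' + α₁' * X ^ d₀)) :
    s = s' := by
  set D := ∑ i ∈ Finset.range t₁, (m i).natDegree with hD
  have hd₀D : d₀ ≤ D := by
    calc d₀ ≤ (m 0).natDegree := hdle 0 (Finset.mem_range.2 (lt_of_lt_of_le ht₁ (ht.le.trans ht₂)))
    _ ≤ D := Finset.single_le_sum (f := fun i => (m i).natDegree) (fun i _ => Nat.zero_le _)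
        (Finset.mem_range.2 ht₁)
  -- divisibility of f₁ - f₁' by each m i
  have hdvd : ∀ i ∈ B, m i ∣ ((s + α₁ * X ^ d₀) - (s' + α₁' * X ^ d₀)) := by
    intro i hi
    have h2 : m i ∣ ((s + α₂ * X ^ d₀) - (s' + α₂' * X ^ d₀)) := by
      have := hres i hi
      have e1 := EuclideanDomain.div_add_mod (s + α₂ * X ^ d₀) (m i)
      have e2 := EuclideanDomain.div_add_mod (s' + α₂' * X ^ d₀) (m i)
      refine ⟨(s + α₂ * X ^ d₀) / m i - (s' + α₂' * X ^ d₀) / m i, ?_⟩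
      linear_combination -e1 + e2 + this
    have key : (s + α₁ * X ^ d₀) - (s' + α₁' * X ^ d₀)
        = (s + α₂ * X ^ d₀) - (s' + α₂' * X ^ d₀) := by
      linear_combination -hdiff
    rw [key]; exact h2
  have hmne : ∀ i ∈ B, m i ≠ 0 := by
    intro i hi h0
    have := hdle i (hB hi)
    rw [h0] at this; simp at this
    omega
  have hpdvd : (∏ i ∈ B, m i) ∣ ((s + α₁ * X ^ d₀) - (s' + α₁' * X ^ d₀)) := by
    apply Finset.prod_dvd_of_coprime _ hdvd
    intro i hi j hj hij
    exact hcop i (hB hi) j (hB hj) hij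
  -- degree bounds
  have hdegf : ∀ (σ α : (ZMod p)[X]), σ.degree < (d₀ : ℕ) →
      α.degree < ((D - d₀ : ℕ) : WithBot ℕ) → (σ + α * X ^ d₀).degree < ((D : ℕ) : WithBot ℕ) := by
    intro σ α hσ hα
    apply lt_of_le_of_lt (degree_add_le _ _)
    apply max_lt (lt_of_lt_of_le hσ (by exact_mod_cast hd₀D))
    apply lt_of_le_of_lt (degree_mul_le _ _)
    rcases eq_or_ne α 0 with rfl | hα0
    · simp only [degree_zero, ne_eq]; exact lt_of_le_of_lt (by simp) (WithBot.bot_lt_coe D)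
    · rw [degree_X_pow]
      have : α.degree + (d₀ : ℕ) < ((D - d₀ : ℕ) : WithBot ℕ) + (d₀ : ℕ) := by
        exact WithBot.add_lt_add_right (by exact_mod_cast WithBot.coe_ne_bot) hα
      apply lt_of_lt_of_le this
      rw [← Nat.cast_add]
      exact_mod_cast Nat.le_of_eq (Nat.sub_add_cancel hd₀D)
  have hf1 : (s + α₁ * X ^ d₀) = (s' + α₁' * X ^ d₀) := by
    by_contra hne
    have hne0 : (s + α₁ * X ^ d₀) - (s' + α₁' * X ^ d₀) ≠ 0 := sub_ne_zero.2 hne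
    have hdeg1 : ((s + α₁ * X ^ d₀) - (s' + α₁' * X ^ d₀)).degree < ((D : ℕ) : WithBot ℕ) := by
      apply lt_of_le_of_lt (degree_sub_le _ _)
      exact max_lt (hdegf s α₁ hs hα₁) (hdegf s' α₁' hs' hα₁')
    have hdegp : ((D : ℕ) : WithBot ℕ) ≤ (∏ i ∈ B, m i).degree := by
      have hne0p : (∏ i ∈ B, m i) ≠ 0 := Finset.prod_ne_zero_iff.2 hmne
      rw [Polynomial.degree_eq_natDegree hne0p, Polynomial.natDegree_prod _ _ hmne]
      exact_mod_cast hBsum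
    have := Polynomial.eq_zero_of_dvd_of_degree_lt hpdvd (lt_of_lt_of_le hdeg1 hdegp)
    exact hne0 this
  -- now peel off mod X^d₀
  have hX : (X : (ZMod p)[X]) ^ d₀ ∣ (s - s') := by
    refine ⟨α₁' - α₁, ?_⟩
    linear_combination hf1
  have hdeg : (s - s').degree < ((X : (ZMod p)[X]) ^ d₀).degree := by
    rw [degree_X_pow]
    exact lt_of_le_of_lt (degree_sub_le _ _) (max_lt hs hs')
  have := Polynomial.eq_zero_of_dvd_of_degree_lt hX hdeg
  exact sub_eq_zero.1 this
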